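/- Let J ⊆ I be an interval with 0 ∈ J and let f : ℝ → ℝ. Suppose f is differentiable at 0 with f′(0) = 0, and suppose that for every t ∈ J with t ≠ 0 one has (f(q·t^n) − f(t))/(q·t^n − t) = 0 (i.e., D_{n,q} f(t) = 0 on J). Then f is constant on J. -/

import Mathlib

open Filter
open scoped Classical

noncomputable section

/-- `[k]_n = ∑_{i=0}^{k-1} n^i` (so `[0]_n = 0`). -/
def nbr (n k : ℕ) : ℕ := ∑ i ∈ Finset.range k, n ^ i

/-- `h(t) = q·t^n`. -/
def hfun (q : ℝ) (n : ℕ) (t : ℝ) : ℝ := q * t ^ n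

/-- `θ = q^(1/(1-n))` (meaningful for `n ≥ 3`). -/
def theta (q : ℝ) (n : ℕ) : ℝ := q ^ ((1 : ℝ) / (1 - (n : ℝ)))

/-- `S = {0}` if `n = 1`, and `S = {-θ, 0, θ}` if `n ≥ 3`. -/
def Sset (q : ℝ) (n : ℕ) : Set ℝ :=
  if n = 1 then {0} else {-theta q n, 0, theta q n}

/-- `I = (-θ, θ)` (all of `ℝ` when `n = 1`). -/
def Iset (q : ℝ) (n : ℕ) : Set ℝ :=
  if n = 1 then Set.univ else Set.Ioo (-theta q n) (theta q n)

/-- The `n,q`-power difference operator `D_{n,q}`. -/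
def Dnq (q : ℝ) (n : ℕ) (f : ℝ → ℝ) (t : ℝ) : ℝ :=
  if t ∈ Sset q n then deriv f t
  else (f (q * t ^ n) - f t) / (q * t ^ n - t)

/-- The `k`-th summand of the series defining the `n,q`-integral `∫_0^x f(t) d_{n,q}t`. -/
def nqSeq (q : ℝ) (n : ℕ) (f : ℝ → ℝ) (x : ℝ) (k : ℕ) : ℝ :=
  q ^ nbr n k * x ^ n ^ k * (q ^ n ^ k * x ^ (n ^ k * (n - 1)) - 1) *
    f (q ^ nbr n k * x ^ n ^ k)

/-- `∫_0^x f(t) d_{n,q}t`. -/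
def nqInt0 (q : ℝ) (n : ℕ) (f : ℝ → ℝ) (x : ℝ) : ℝ := -∑' k : ℕ, nqSeq q n f x k

/-- `∫_a^b f(t) d_{n,q}t = ∫_0^b f(t) d_{n,q}t − ∫_0^a f(t) d_{n,q}t`. -/
def nqInt (q : ℝ) (n : ℕ) (f : ℝ → ℝ) (a b : ℝ) : ℝ :=
  nqInt0 q n f b - nqInt0 q n f a

/-- The orbit `[s]_{n,q} = {q^{[k]_n}·s^{n^k} : k ∈ ℕ}`. -/
def nqOrbit (q : ℝ) (n : ℕ) (s : ℝ) : Set ℝ :=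
  Set.range fun k : ℕ => q ^ nbr n k * s ^ n ^ k

/-- The `n,q`-interval `[a,b]_{n,q}`. -/
def nqInterval (q : ℝ) (n : ℕ) (a b : ℝ) : Set ℝ :=
  nqOrbit q n a ∪ nqOrbit q n b ∪ {0}

theorem stmt3 (q : ℝ) (hq0 : 0 < q) (hq1 : q < 1) (n : ℕ) (hn : Odd n)
    (J : Set ℝ) (hJI : J ⊆ Iset q n) (hJ : J.OrdConnected) (h0J : (0 : ℝ) ∈ J)
    (f : ℝ → ℝ) (hf0 : HasDerivAt f 0 0)
    (hD : ∀ t ∈ J, t ≠ 0 → (f (q * t ^ n) - f t) / (q * t ^ n - t) = 0) :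
    ∀ s ∈ J, ∀ t ∈ J, f s = f t := by
  suffices h : ∀ s ∈ J, f s = f 0 by
    intro s hs t ht; rw [h s hs, h t ht]
  intro s hs
  rcases eq_or_ne s 0 with rfl | hs0
  · rfl
  have hn1 : 1 ≤ n := hn.pos
  have hs0' : 0 < |s| := abs_pos.2 hs0
  set c : ℝ := q * |s| ^ (n - 1) with hc
  have hc0 : 0 ≤ c := by positivity
  have hc1 : c < 1 := by
    rcases eq_or_ne n 1 with rfl | hne
    · simpa [hc] using hq1
    · have hn3 : 2 ≤ n := by omega
      have hsI : s ∈ Set.Ioo (-theta q n) (theta q n) := by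
        have := hJI hs; rwa [Iset, if_neg hne] at this
      have habs : |s| < theta q n := abs_lt.2 ⟨hsI.1, hsI.2⟩
      have hcast : ((n - 1 : ℕ) : ℝ) = (n : ℝ) - 1 := by
        push_cast [Nat.cast_sub hn1]; ring
      have hne' : (1 : ℝ) - (n : ℝ) ≠ 0 := by
        have : (2 : ℝ) ≤ (n : ℝ) := by exact_mod_cast hn3
        linarith
      have hθpow : theta q n ^ (n - 1) = q⁻¹ := by
        rw [theta, ← Real.rpow_natCast (q ^ ((1:ℝ)/(1 - (n:ℝ)))) (n - 1),
          ← Real.rpow_mul hq0.le, hcast]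
        have : (1:ℝ)/(1 - (n:ℝ)) * ((n:ℝ) - 1) = -1 := by
          field_simp
          ring
        rw [this, Real.rpow_neg_one]
      have hpow : |s| ^ (n - 1) < q⁻¹ := by
        calc |s| ^ (n - 1) < theta q n ^ (n - 1) := by
              apply pow_lt_pow_left₀ habs (abs_nonneg s) (by omega)
          _ = q⁻¹ := hθpow
      have := (mul_lt_mul_iff_right₀ hq0).2 hpow
      rwa [mul_inv_cancel₀ hq0.ne'] at this
  -- key step lemma
  have key : ∀ x, x ∈ Set.uIcc 0 s → x ≠ 0 →
      q * x ^ n ∈ Set.uIcc 0 s ∧ q * x ^ n ≠ 0 ∧ f (q * x ^ n) = f x ∧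
        |q * x ^ n| ≤ c * |x| := by
    intro x hx hx0
    have hx0' : 0 < |x| := abs_pos.2 hx0
    have hxs : |x| ≤ |s| := by
      rcases le_total 0 s with h | h
      · rw [Set.uIcc_of_le h] at hx
        rw [abs_of_nonneg hx.1, abs_of_nonneg h]; exact hx.2
      · rw [Set.uIcc_of_ge h] at hx
        rw [abs_of_nonpos hx.2, abs_of_nonpos h]; linarith [hx.1]
    have habsle : |q * x ^ n| ≤ c * |x| := by
      have h1 : |x| ^ (n - 1) ≤ |s| ^ (n - 1) := pow_le_pow_left₀ (abs_nonneg x) hxs _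
      have h2 : n = (n - 1) + 1 := by omega
      rw [abs_mul, abs_pow, abs_of_pos hq0, h2, pow_succ, hc]
      calc q * (|x| ^ (n-1) * |x|) = q * |x| ^ (n-1) * |x| := by ring
        _ ≤ q * |s| ^ (n-1) * |x| := by
            apply mul_le_mul_of_nonneg_right _ (abs_nonneg x)
            exact mul_le_mul_of_nonneg_left h1 hq0.le
    have hlt : |q * x ^ n| < |x| := lt_of_le_of_lt habsle (by
      calc c * |x| < 1 * |x| := (mul_lt_mul_iff_left₀ hx0').2 hc1
        _ = |x| := one_mul _)
    have hne0 : q * x ^ n ≠ 0 := mul_ne_zero hq0.ne' (pow_ne_zero n hx0)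
    have hmem : q * x ^ n ∈ Set.uIcc 0 s := by
      rcases le_total 0 s with h | h
      · rw [Set.uIcc_of_le h] at hx ⊢
        have hxp : 0 < x := lt_of_le_of_ne hx.1 (Ne.symm hx0)
        have hp : 0 < q * x ^ n := by positivity
        refine ⟨hp.le, ?_⟩
        rw [abs_of_pos hp, abs_of_pos hxp] at hlt
        linarith [hx.2]
      · rw [Set.uIcc_of_ge h] at hx ⊢
        have hxn : x < 0 := lt_of_le_of_ne hx.2 hx0
        have hpn : q * x ^ n < 0 := mul_neg_of_pos_of_neg hq0 (hn.pow_neg hxn)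
        refine ⟨?_, hpn.le⟩
        rw [abs_of_neg hpn, abs_of_neg hxn] at hlt
        linarith [hx.1]
    have hxJ : x ∈ J := hJ.uIcc_subset h0J hs hx
    have hdne : q * x ^ n - x ≠ 0 := by
      intro h
      have : q * x ^ n = x := by linarith [sub_eq_zero.1 h]
      rw [this] at hlt; exact lt_irrefl _ hlt
    have := hD x hxJ hx0
    rcases div_eq_zero_iff.1 this with h | h
    · exact ⟨hmem, hne0, by linarith [sub_eq_zero.1 (by linarith : f (q*x^n) - f x = 0)], habsle⟩
    · exact absurd h hdne
  -- the iterated sequence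
  set u : ℕ → ℝ := fun k => (fun y => q * y ^ n)^[k] s with hu
  have husucc : ∀ k, u (k + 1) = q * (u k) ^ n := fun k =>
    Function.iterate_succ_apply' _ _ _
  have main : ∀ k, u k ∈ Set.uIcc 0 s ∧ u k ≠ 0 ∧ f (u k) = f s ∧
      |u k| ≤ c ^ k * |s| := by
    intro k
    induction k with
    | zero => exact ⟨Set.right_mem_uIcc, hs0, rfl, by simp [hu]⟩
    | succ k ih =>
      obtain ⟨h1, h2, h3, h4⟩ := ih
      obtain ⟨g1, g2, g3, g4⟩ := key (u k) h1 h2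
      refine ⟨by rw [husucc]; exact g1, by rw [husucc]; exact g2,
        by rw [husucc, g3]; exact h3, ?_⟩
      rw [husucc]
      calc |q * (u k) ^ n| ≤ c * |u k| := g4
        _ ≤ c * (c ^ k * |s|) := mul_le_mul_of_nonneg_left h4 hc0
        _ = c ^ (k + 1) * |s| := by ring
  have hu0 : Tendsto u atTop (nhds 0) := by
    apply squeeze_zero_norm (fun k => (main k).2.2.2)
    have := (tendsto_pow_atTop_nhds_zero_of_lt_one hc0 hc1).mul_const |s|
    simpa using this
  have hcont : ContinuousAt f 0 := hf0.continuousAt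
  have htend : Tendsto (fun k => f (u k)) atTop (nhds (f 0)) := hcont.tendsto.comp hu0
  have heq : (fun k => f (u k)) = fun _ => f s := funext fun k => (main k).2.2.1
  rw [heq] at htend
  exact tendsto_nhds_unique tendsto_const_nhds htend
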